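/- (Tong's diagonalization) Let E = ℝ^N equipped with a norm for which the standard basis is 1-unconditional, let 1 ≤ p ≤ ∞, and let T : E → ℓ_p^N be a linear operator given by an N×N real matrix (t_{ij}). Let T' be the diagonal operator with matrix diag(t_{11}, …, t_{NN}). Then ‖T'‖ ≤ ‖T‖. -/

import Mathlib

open ENNReal

section TongAux

variable {N : ℕ} (p : ℝ≥0∞) [Fact (1 ≤ p)]

private lemma tong_norm_congr (f g : Fin N → ℝ) (h : ∀ i, |f i| = |g i|) :
    ‖(WithLp.equiv p (∀ _ : Fin N, ℝ)).symm f‖ =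
      ‖(WithLp.equiv p (∀ _ : Fin N, ℝ)).symm g‖ := by
  rcases eq_or_ne p ∞ with rfl | hp
  · rw [PiLp.norm_eq_ciSup, PiLp.norm_eq_ciSup]
    refine iSup_congr fun i => ?_
    simp only [WithLp.equiv_symm_apply, WithLp.ofLp_toLp, Real.norm_eq_abs, h i]
  · have hp0 : 0 < p.toReal :=
      ENNReal.toReal_pos (zero_lt_one.trans_le (Fact.out : (1:ℝ≥0∞) ≤ p)).ne' hp
    rw [PiLp.norm_eq_sum hp0, PiLp.norm_eq_sum hp0]
    congr 1
    refine Finset.sum_congr rfl fun i _ => ?_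
    simp only [WithLp.equiv_symm_apply, WithLp.ofLp_toLp, Real.norm_eq_abs, h i]

private lemma tong_norm_le_sum (f : Fin N → ℝ) :
    ‖(WithLp.equiv p (∀ _ : Fin N, ℝ)).symm f‖ ≤ ∑ i, |f i| := by
  have h1 : (WithLp.equiv p (∀ _ : Fin N, ℝ)).symm f
      = ∑ i, (WithLp.equiv p (∀ _ : Fin N, ℝ)).symm (Pi.single i (f i)) := by
    conv_lhs => rw [← Finset.univ_sum_single f]
    rw [WithLp.equiv_symm_apply, WithLp.toLp_sum]
  calc ‖(WithLp.equiv p (∀ _ : Fin N, ℝ)).symm f‖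
      = ‖∑ i, (WithLp.equiv p (∀ _ : Fin N, ℝ)).symm (Pi.single i (f i))‖ := by rw [h1]
    _ ≤ ∑ i, ‖(WithLp.equiv p (∀ _ : Fin N, ℝ)).symm (Pi.single i (f i))‖ :=
        norm_sum_le _ _
    _ = ∑ i, |f i| := by
        refine Finset.sum_congr rfl fun i _ => ?_
        rw [WithLp.equiv_symm_apply, PiLp.norm_toLp_single, Real.norm_eq_abs]

/-- sign of a boolean -/
private def tsgn (b : Bool) : ℝ := if b then 1 else -1

private lemma tsgn_mem (b : Bool) : tsgn b = 1 ∨ tsgn b = -1 := by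
  cases b <;> simp [tsgn]

private lemma tsgn_abs (b : Bool) : |tsgn b| = 1 := by
  cases b <;> norm_num [tsgn]

private lemma tsgn_orth (i j : Fin N) :
    ∑ σ : Fin N → Bool, tsgn (σ i) * tsgn (σ j)
      = if i = j then (2 : ℝ) ^ N else 0 := by
  classical
  have key : ∀ σ : Fin N → Bool, tsgn (σ i) * tsgn (σ j)
      = ∏ k, ((if k = i then tsgn (σ k) else 1) * (if k = j then tsgn (σ k) else 1)) := by
    intro σ
    rw [Finset.prod_mul_distrib, Finset.prod_ite_eq' Finset.univ i (fun k => tsgn (σ k)),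
      Finset.prod_ite_eq' Finset.univ j (fun k => tsgn (σ k))]
    simp
  simp_rw [key]
  rw [← Fintype.prod_sum fun (k : Fin N) (b : Bool) => (if k = i then tsgn b else 1) * if k = j then tsgn b else 1]
  rcases eq_or_ne i j with rfl | hij
  · simp only [if_pos rfl]
    have h2 : ∀ k : Fin N, (∑ b : Bool, ((if k = i then tsgn b else 1) *
        (if k = i then tsgn b else 1))) = 2 := by
      intro k
      rcases eq_or_ne k i with rfl | hk
      · norm_num [Fintype.sum_bool, tsgn]
      · simp [hk, Fintype.sum_bool]
    rw [Finset.prod_congr rfl fun k _ => h2 k]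
    simp
  · rw [if_neg hij]
    apply Finset.prod_eq_zero (Finset.mem_univ i)
    simp [hij, Fintype.sum_bool, tsgn]

end TongAux

/-- (Tong's diagonalization) Let `ν` be a norm on `ℝ^N` for which the standard basis is
`1`-unconditional, `1 ≤ p ≤ ∞`, and let `T : (ℝ^N, ν) → ℓ_p^N` be the linear operator
given by the matrix `(t_{ij})`. Then the diagonal operator `T' = diag(t_{11},…,t_{NN})`
satisfies `‖T'‖ ≤ ‖T‖` (operator norms expressed as suprema over the `ν`-unit ball). -/
theorem stmt15 (N : ℕ) (p : ℝ≥0∞) [Fact (1 ≤ p)]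
    (ν : (Fin N → ℝ) → ℝ)
    (hadd : ∀ v w, ν (v + w) ≤ ν v + ν w)
    (hsmul : ∀ (c : ℝ) v, ν (c • v) = |c| * ν v)
    (hzero : ∀ v, ν v = 0 ↔ v = 0)
    (huncond : ∀ ε : Fin N → ℝ, (∀ i, ε i = 1 ∨ ε i = -1) →
      ∀ v, ν (fun i => ε i * v i) = ν v)
    (t : Fin N → Fin N → ℝ) :
    sSup {r : ℝ | ∃ v : Fin N → ℝ, ν v ≤ 1 ∧
        r = ‖(WithLp.equiv p (∀ _ : Fin N, ℝ)).symm (fun i => t i i * v i)‖} ≤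
      sSup {r : ℝ | ∃ v : Fin N → ℝ, ν v ≤ 1 ∧
        r = ‖(WithLp.equiv p (∀ _ : Fin N, ℝ)).symm (fun i => ∑ j, t i j * v j)‖} := by
  classical
  set e := (WithLp.equiv p (∀ _ : Fin N, ℝ)).symm with he
  set B := {r : ℝ | ∃ v : Fin N → ℝ, ν v ≤ 1 ∧
      r = ‖e (fun i => ∑ j, t i j * v j)‖} with hB
  -- basic facts about ν
  have hν0 : ν 0 = 0 := (hzero 0).mpr rfl
  have hνneg : ∀ v, ν (-v) = ν v := by
    intro v
    have h : (-v) = (-1 : ℝ) • v := by ext i; simp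
    rw [h, hsmul]; norm_num
  have hνnonneg : ∀ v, 0 ≤ ν v := by
    intro v
    have h1 : ν (v + (-v)) ≤ ν v + ν (-v) := hadd v (-v)
    rw [add_neg_cancel, hν0, hνneg] at h1
    linarith
  have hsingle_pos : ∀ i : Fin N, 0 < ν (Pi.single i 1) := by
    intro i
    rcases (hνnonneg (Pi.single i 1)).lt_or_eq with h | h
    · exact h
    · exfalso
      have h0 := (hzero (Pi.single i 1)).mp h.symm
      have h1 : (Pi.single i 1 : Fin N → ℝ) i = 0 := by rw [h0]; rfl
      rw [Pi.single_eq_same] at h1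
      exact one_ne_zero h1
  -- coordinate bound from unconditionality
  have hcoord : ∀ (v : Fin N → ℝ) (i : Fin N), |v i| * ν (Pi.single i 1) ≤ ν v := by
    intro v i
    set ε : Fin N → ℝ := fun j => if j = i then 1 else -1 with hε
    have hε1 : ∀ j, ε j = 1 ∨ ε j = -1 := by
      intro j; by_cases h : j = i <;> simp [hε, h]
    have hw : ν (fun j => ε j * v j) = ν v := huncond ε hε1 v
    have hkey : v + (fun j => ε j * v j) = (2 * v i) • (Pi.single i 1 : Fin N → ℝ) := by
      ext j
      by_cases h : j = i
      · subst h; simp [hε]; ring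
      · simp [hε, h, Pi.single_eq_of_ne h]
    have h2 : ν (v + (fun j => ε j * v j)) ≤ ν v + ν (fun j => ε j * v j) := hadd _ _
    rw [hw, hkey, hsmul, abs_mul] at h2
    have h3 : |(2 : ℝ)| = 2 := by norm_num
    rw [h3] at h2
    linarith
  have hcoord' : ∀ (v : Fin N → ℝ), ν v ≤ 1 → ∀ i, |v i| ≤ (ν (Pi.single i 1))⁻¹ := by
    intro v hv i
    rw [show (ν (Pi.single i 1))⁻¹ = 1 / ν (Pi.single i 1) by rw [one_div],
      le_div_iff₀ (hsingle_pos i)]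
    exact (hcoord v i).trans hv
  -- B is bounded above
  have hBdd : BddAbove B := by
    refine ⟨∑ i, ∑ j, |t i j| * (ν (Pi.single j 1))⁻¹, ?_⟩
    rintro r ⟨v, hv, rfl⟩
    refine (tong_norm_le_sum p _).trans ?_
    refine Finset.sum_le_sum fun i _ => ?_
    refine (Finset.abs_sum_le_sum_abs _ _).trans ?_
    refine Finset.sum_le_sum fun j _ => ?_
    rw [abs_mul]
    exact mul_le_mul_of_nonneg_left (hcoord' v hv j) (abs_nonneg _)
  -- 0 ∈ B
  have h0B : (0 : ℝ) ∈ B := by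
    refine ⟨0, by rw [hν0]; exact zero_le_one, ?_⟩
    have h : (fun i : Fin N => ∑ j, t i j * (0 : Fin N → ℝ) j) = 0 := by
      ext i; simp
    rw [h]
    simp [he]
  have hsSupB0 : (0 : ℝ) ≤ sSup B := le_csSup hBdd h0B
  -- main estimate
  refine Real.sSup_le ?_ hsSupB0
  rintro r ⟨v, hv, rfl⟩
  have h2N : (0 : ℝ) < 2 ^ N := by positivity
  -- the averaging identity, coordinatewise
  have hdiag : ∀ i, (2:ℝ)^N * (t i i * v i)
      = ∑ σ : Fin N → Bool, tsgn (σ i) * ∑ j, t i j * (tsgn (σ j) * v j) := by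
    intro i
    have c1 : ∑ σ : Fin N → Bool, tsgn (σ i) * ∑ j, t i j * (tsgn (σ j) * v j)
        = ∑ σ : Fin N → Bool, ∑ j, (t i j * v j) * (tsgn (σ i) * tsgn (σ j)) := by
      refine Finset.sum_congr rfl fun σ _ => ?_
      rw [Finset.mul_sum]
      exact Finset.sum_congr rfl fun j _ => by ring
    rw [c1, Finset.sum_comm]
    have c2 : ∀ j, ∑ σ : Fin N → Bool, (t i j * v j) * (tsgn (σ i) * tsgn (σ j))
        = (t i j * v j) * (if i = j then (2:ℝ)^N else 0) := by
      intro j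
      rw [← Finset.mul_sum, tsgn_orth]
    rw [Finset.sum_congr rfl fun j _ => c2 j]
    simp only [mul_ite, mul_zero]
    rw [Finset.sum_ite_eq Finset.univ i fun j => t i j * v j * 2 ^ N]
    simp [mul_comm]
  have hvec : (fun i => t i i * v i)
      = ((2:ℝ)^N)⁻¹ • ∑ σ : Fin N → Bool,
          (fun i => tsgn (σ i) * ∑ j, t i j * (tsgn (σ j) * v j)) := by
    ext i
    simp only [Pi.smul_apply, Finset.sum_apply, smul_eq_mul]
    rw [← hdiag i]
    field_simp
  calc ‖e (fun i => t i i * v i)‖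
      = ((2:ℝ)^N)⁻¹ * ‖∑ σ : Fin N → Bool,
          e (fun i => tsgn (σ i) * ∑ j, t i j * (tsgn (σ j) * v j))‖ := by
        rw [hvec]
        have h1 : e (((2:ℝ)^N)⁻¹ • ∑ σ : Fin N → Bool,
            (fun i => tsgn (σ i) * ∑ j, t i j * (tsgn (σ j) * v j)))
          = ((2:ℝ)^N)⁻¹ • ∑ σ : Fin N → Bool,
            e (fun i => tsgn (σ i) * ∑ j, t i j * (tsgn (σ j) * v j)) := by
            rw [he, WithLp.equiv_symm_apply, WithLp.toLp_smul, WithLp.toLp_sum]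
        rw [h1, norm_smul, Real.norm_eq_abs, abs_of_pos (by positivity)]
    _ ≤ ((2:ℝ)^N)⁻¹ * ∑ σ : Fin N → Bool,
          ‖e (fun i => tsgn (σ i) * ∑ j, t i j * (tsgn (σ j) * v j))‖ := by
        exact mul_le_mul_of_nonneg_left (norm_sum_le _ _) (by positivity)
    _ ≤ ((2:ℝ)^N)⁻¹ * ∑ σ : Fin N → Bool, sSup B := by
        refine mul_le_mul_of_nonneg_left (Finset.sum_le_sum fun σ _ => ?_) (by positivity)
        have habs : ∀ i, |tsgn (σ i) * ∑ j, t i j * (tsgn (σ j) * v j)|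
            = |∑ j, t i j * (tsgn (σ j) * v j)| := by
          intro i; rw [abs_mul, tsgn_abs, one_mul]
        rw [tong_norm_congr p _ _ habs]
        refine le_csSup hBdd ⟨fun j => tsgn (σ j) * v j, ?_, rfl⟩
        rw [huncond (fun j => tsgn (σ j)) (fun j => tsgn_mem (σ j)) v]
        exact hv
    _ = sSup B := by
        rw [Finset.sum_const, Finset.card_univ]
        have hc : Fintype.card (Fin N → Bool) = 2 ^ N := by
          simp [Fintype.card_fun]
        rw [hc, nsmul_eq_mul]
        push_cast
        rw [← mul_assoc, inv_mul_cancel₀ h2N.ne', one_mul]
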